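/- Let (S, I0, I1, R, D) be an equilibrium of the macroscopic system with I0 > 0 and I1 > 0, and assume δ0, δ1 ≥ 0, χ > 0, β00 > 0, β01 > 0, β11 ≥ 0 and π0 > 0. Then necessarily δ0 = δ1 = 0, S = π0/β00, the inequality β00·π1 > β11·π0 holds, and moreover I1 = (β01·π0/(β00·π1 − β11·π0))·I0 and R = (π0·I0 + π1·I1)/χ. -/

import Mathlib

/-- At a co-circulating strains equilibrium (`I0 > 0`, `I1 > 0`)
with `χ > 0`, `β00 > 0`, `β01 > 0`, `β11 ≥ 0`, `π0 > 0` and `δ0, δ1 ≥ 0`, one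
necessarily has `δ0 = δ1 = 0`, `S = π0/β00`, `β00·π1 > β11·π0`,
`I1 = (β01·π0/(β00·π1 − β11·π0))·I0` and `R = (π0·I0 + π1·I1)/χ`. -/
theorem cocirculating_equilibrium
    (β00 β01 β11 π0 π1 δ0 δ1 χ : ℝ) (S I0 I1 R D : ℝ)
    (hδ0 : 0 ≤ δ0) (hδ1 : 0 ≤ δ1) (hχ : 0 < χ)
    (hβ00 : 0 < β00) (hβ01 : 0 < β01) (hβ11 : 0 ≤ β11) (hπ0 : 0 < π0)
    (hI0 : 0 < I0) (hI1 : 0 < I1)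
    (e1 : -(β00 * I0 + β01 * I0 + β11 * I1) * S + χ * R = 0)
    (e2 : β00 * I0 * S - (π0 + δ0) * I0 = 0)
    (e3 : (β01 * I0 + β11 * I1) * S - (π1 + δ1) * I1 = 0)
    (e4 : π0 * I0 + π1 * I1 - χ * R = 0)
    (e5 : δ0 * I0 + δ1 * I1 = 0) :
    δ0 = 0 ∧ δ1 = 0 ∧ S = π0 / β00 ∧ β00 * π1 > β11 * π0 ∧
    I1 = (β01 * π0 / (β00 * π1 - β11 * π0)) * I0 ∧
    R = (π0 * I0 + π1 * I1) / χ := by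
  have h1 : δ0 * I0 = 0 := le_antisymm (by nlinarith [mul_nonneg hδ1 hI1.le])
    (mul_nonneg hδ0 hI0.le)
  have h2 : δ1 * I1 = 0 := by linarith
  have hd0 : δ0 = 0 := by
    rcases mul_eq_zero.1 h1 with h | h
    · exact h
    · exact absurd h hI0.ne'
  have hd1 : δ1 = 0 := by
    rcases mul_eq_zero.1 h2 with h | h
    · exact h
    · exact absurd h hI1.ne'
  subst hd0 hd1
  have hS : β00 * S = π0 := by
    have : I0 * (β00 * S - π0) = 0 := by ring_nf; ring_nf at e2; linarith
    rcases mul_eq_zero.1 this with h | h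
    · exact absurd h hI0.ne'
    · linarith
  have hSval : S = π0 / β00 := by field_simp; linarith [hS]
  have hSpos : 0 < S := by
    rw [hSval]; positivity
  have hkey : β01 * I0 * S + β11 * I1 * S = π1 * I1 := by ring_nf; ring_nf at e3; linarith
  have hkey2 : β00 * π1 * I1 = β11 * π0 * I1 + β01 * π0 * I0 := by
    linear_combination (β01 * I0 + β11 * I1) * hS - β00 * hkey
  have hineq : β00 * π1 > β11 * π0 := by
    nlinarith [mul_pos (mul_pos hβ01 hπ0) hI0]
  refine ⟨rfl, rfl, hSval, hineq, ?_, ?_⟩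
  · have hne : β00 * π1 - β11 * π0 ≠ 0 := by linarith
    field_simp
    rw [eq_div_iff (by intro h; apply hne; linarith)]
    linear_combination hkey2
  · field_simp
    linarith
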